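/- arXiv:0904.0984 — 2 statements merged into one kernel-verified Lean document; each statement's English description precedes it below -/
import Mathlib

section
/- Let Q and Q̃ be two equivalent probability measures on a measurable space, let S : Ω → ℝ be a nonnegative random variable with ∫ S dQ = 1 and ∫ S dQ̃ = 1, and define the 'dual' measures Q' and Q̃' by dQ'/dQ = S and dQ̃'/dQ̃ = S. Let g : Ω → ℝ be measurable with |g(ω)| ≤ c·S(ω) + d for all ω, where c, d ≥ 0. Then |∫ g dQ − ∫ g dQ̃| ≤ c·‖Q' − Q̃'‖ + d·‖Q − Q̃‖, where ‖·‖ denotes total variation distance. -/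
open MeasureTheory

/-- Total variation distance `2 sup_A |μ(A) − ν(A)|`. -/
noncomputable def tv {Ω : Type*} [MeasurableSpace Ω] (μ ν : Measure Ω) : ℝ :=
  2 * ⨆ A : {A : Set Ω // MeasurableSet A}, |(μ A.1).toReal - (ν A.1).toReal|

-- helper: set integral as toReal of withDensity
lemma wd_apply {Ω : Type*} [MeasurableSpace Ω] (Q : Measure Ω) (φ : Ω → ℝ)
    (hφm : Measurable φ) (hφnn : ∀ ω, 0 ≤ φ ω) (hφint : Integrable φ Q)
    {B : Set Ω} (hB : MeasurableSet B) :
    ((Q.withDensity fun ω => ENNReal.ofReal (φ ω)) B).toReal = ∫ ω in B, φ ω ∂Q := by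
  rw [withDensity_apply _ hB,
    ← ofReal_integral_eq_lintegral_ofReal (hφint.restrict)
      (Filter.Eventually.of_forall hφnn),
    ENNReal.toReal_ofReal (integral_nonneg hφnn)]

lemma tv_bound {Ω : Type*} [MeasurableSpace Ω] (Q Q' : Measure Ω)
    [IsProbabilityMeasure Q] [IsProbabilityMeasure Q'] (h1 : Q ≪ Q')
    (φ : Ω → ℝ) (hφm : Measurable φ) (hφnn : ∀ ω, 0 ≤ φ ω)
    (hφint : Integrable φ Q) (hφint' : Integrable φ Q') :
    ∫ ω, |(Q.rnDeriv Q' ω).toReal - 1| * φ ω ∂Q' ≤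
      tv (Q.withDensity fun ω => ENNReal.ofReal (φ ω))
         (Q'.withDensity fun ω => ENNReal.ofReal (φ ω)) := by
  set h : Ω → ℝ := fun ω => (Q.rnDeriv Q' ω).toReal with hh
  set μφ := Q.withDensity fun ω => ENNReal.ofReal (φ ω) with hμφ
  set νφ := Q'.withDensity fun ω => ENNReal.ofReal (φ ω) with hνφ
  have hμfin : IsFiniteMeasure μφ := isFiniteMeasure_withDensity_ofReal hφint.2
  have hνfin : IsFiniteMeasure νφ := isFiniteMeasure_withDensity_ofReal hφint'.2
  have hhm : Measurable h := (Measure.measurable_rnDeriv Q Q').ennreal_toReal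
  set A : Set Ω := {ω | 1 ≤ h ω} with hAdef
  have hA : MeasurableSet A := measurableSet_le measurable_const hhm
  have hmul : Integrable (fun ω => h ω * φ ω) Q' := by
    simpa [smul_eq_mul] using (integrable_rnDeriv_smul_iff h1).mpr hφint
  have hint : Integrable (fun ω => |h ω - 1| * φ ω) Q' := by
    have : (fun ω => |h ω - 1| * φ ω) = fun ω => |(h ω - 1) * φ ω| := by
      funext ω; rw [abs_mul, abs_of_nonneg (hφnn ω)]
    rw [this]
    exact ((hmul.sub hφint').abs).congr (by simp [sub_mul])
  have hset : ∀ B : Set Ω, MeasurableSet B →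
      ∫ ω in B, (h ω - 1) * φ ω ∂Q' = (μφ B).toReal - (νφ B).toReal := by
    intro B hB
    rw [wd_apply Q φ hφm hφnn hφint hB, wd_apply Q' φ hφm hφnn hφint' hB]
    have e1 : ∫ ω in B, h ω * φ ω ∂Q' = ∫ ω in B, φ ω ∂Q := by
      simpa [smul_eq_mul] using setIntegral_rnDeriv_smul h1 hB (f := φ)
    calc ∫ ω in B, (h ω - 1) * φ ω ∂Q'
        = ∫ ω in B, (h ω * φ ω - φ ω) ∂Q' := by simp [sub_mul]
      _ = ∫ ω in B, h ω * φ ω ∂Q' - ∫ ω in B, φ ω ∂Q' :=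
          integral_sub hmul.integrableOn hφint'.integrableOn
      _ = ∫ ω in B, φ ω ∂Q - ∫ ω in B, φ ω ∂Q' := by rw [e1]
  -- bounded above
  have hbdd : BddAbove (Set.range fun B : {B : Set Ω // MeasurableSet B} =>
      |(μφ B.1).toReal - (νφ B.1).toReal|) := by
    refine ⟨(μφ Set.univ).toReal + (νφ Set.univ).toReal, ?_⟩
    rintro x ⟨B, rfl⟩
    refine (abs_sub _ _).trans (add_le_add ?_ ?_) <;>
      rw [abs_of_nonneg ENNReal.toReal_nonneg] <;>
      exact ENNReal.toReal_mono (measure_ne_top _ _) (measure_mono (Set.subset_univ _))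
  have hsup : ∀ B : Set Ω, MeasurableSet B → (μφ B).toReal - (νφ B).toReal ≤
      ⨆ B : {B : Set Ω // MeasurableSet B}, |(μφ B.1).toReal - (νφ B.1).toReal| := by
    intro B hB
    exact (le_abs_self _).trans (le_ciSup hbdd ⟨B, hB⟩)
  calc ∫ ω, |h ω - 1| * φ ω ∂Q'
      = ∫ ω in A, |h ω - 1| * φ ω ∂Q' + ∫ ω in Aᶜ, |h ω - 1| * φ ω ∂Q' :=
        (integral_add_compl hA hint).symm
    _ = ∫ ω in A, (h ω - 1) * φ ω ∂Q' + ∫ ω in Aᶜ, (1 - h ω) * φ ω ∂Q' := by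
        congr 1
        · exact setIntegral_congr_fun hA (fun ω hω => by
            rw [abs_of_nonneg (by simpa [hAdef] using hω : (0:ℝ) ≤ h ω - 1)])
        · exact setIntegral_congr_fun hA.compl (fun ω hω => by
            have : h ω < 1 := by simpa [hAdef] using hω
            rw [abs_of_nonpos (by linarith), neg_sub])
    _ = ((μφ A).toReal - (νφ A).toReal) + ((νφ Aᶜ).toReal - (μφ Aᶜ).toReal) := by
        rw [hset A hA]
        congr 1
        have : ∀ ω, (1 - h ω) * φ ω = -((h ω - 1) * φ ω) := fun ω => by ring
        rw [integral_congr_ae (Filter.Eventually.of_forall fun ω => this ω),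
          integral_neg, hset Aᶜ hA.compl]
        ring
    _ ≤ (⨆ B : {B : Set Ω // MeasurableSet B}, |(μφ B.1).toReal - (νφ B.1).toReal|)
        + ⨆ B : {B : Set Ω // MeasurableSet B}, |(μφ B.1).toReal - (νφ B.1).toReal| := by
        refine add_le_add (hsup A hA) ?_
        have := hsup Aᶜ hA.compl
        have h2' : (νφ Aᶜ).toReal - (μφ Aᶜ).toReal ≤ |(μφ Aᶜ).toReal - (νφ Aᶜ).toReal| := by
          rw [abs_sub_comm]; exact le_abs_self _
        exact h2'.trans (le_ciSup hbdd ⟨Aᶜ, hA.compl⟩)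
    _ = tv μφ νφ := by rw [tv]; ring

theorem stmt_1 {Ω : Type*} [MeasurableSpace Ω] (Q Q' : Measure Ω)
    [IsProbabilityMeasure Q] [IsProbabilityMeasure Q'] (h1 : Q ≪ Q') (h2 : Q' ≪ Q)
    (S : Ω → ℝ) (hSmeas : Measurable S) (hSnn : ∀ ω, 0 ≤ S ω)
    (hSint : Integrable S Q) (hSint' : Integrable S Q')
    (hS1 : ∫ ω, S ω ∂Q = 1) (hS1' : ∫ ω, S ω ∂Q' = 1)
    (g : Ω → ℝ) (hg : Measurable g) (c d : ℝ) (hc : 0 ≤ c) (hd : 0 ≤ d)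
    (hbound : ∀ ω, |g ω| ≤ c * S ω + d)
    (hgint : Integrable g Q) (hgint' : Integrable g Q') :
    |∫ ω, g ω ∂Q - ∫ ω, g ω ∂Q'| ≤
      c * tv (Q.withDensity fun ω => ENNReal.ofReal (S ω))
            (Q'.withDensity fun ω => ENNReal.ofReal (S ω))
      + d * tv Q Q' := by
  set h : Ω → ℝ := fun ω => (Q.rnDeriv Q' ω).toReal with hh
  have hmulg : Integrable (fun ω => h ω * g ω) Q' := by
    simpa [smul_eq_mul] using (integrable_rnDeriv_smul_iff h1).mpr hgint
  have hmulS : Integrable (fun ω => h ω * S ω) Q' := by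
    simpa [smul_eq_mul] using (integrable_rnDeriv_smul_iff h1).mpr hSint
  have hintS : Integrable (fun ω => |h ω - 1| * S ω) Q' := by
    have : (fun ω => |h ω - 1| * S ω) = fun ω => |(h ω - 1) * S ω| := by
      funext ω; rw [abs_mul, abs_of_nonneg (hSnn ω)]
    rw [this]
    exact ((hmulS.sub hSint').abs).congr (by simp [sub_mul])
  have hint1 : Integrable (fun ω => |h ω - 1|) Q' :=
    (Measure.integrable_toReal_rnDeriv.sub (integrable_const 1)).abs
  have hintg : Integrable (fun ω => |h ω - 1| * |g ω|) Q' := by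
    have : (fun ω => |h ω - 1| * |g ω|) = fun ω => |(h ω - 1) * g ω| := by
      funext ω; rw [abs_mul]
    rw [this]
    exact ((hmulg.sub hgint').abs).congr (by simp [sub_mul])
  have hintcomb : Integrable (fun ω => c * (|h ω - 1| * S ω) + d * |h ω - 1|) Q' :=
    (hintS.const_mul c).add (hint1.const_mul d)
  have step1 : ∫ ω, g ω ∂Q - ∫ ω, g ω ∂Q' = ∫ ω, (h ω - 1) * g ω ∂Q' := by
    have e1 : ∫ ω, h ω * g ω ∂Q' = ∫ ω, g ω ∂Q := by
      simpa [smul_eq_mul] using integral_rnDeriv_smul h1 (f := g)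
    rw [← e1, ← integral_sub hmulg hgint']
    congr 1; funext ω; ring
  rw [step1]
  calc |∫ ω, (h ω - 1) * g ω ∂Q'|
      ≤ ∫ ω, |h ω - 1| * |g ω| ∂Q' := by
        simpa [Real.norm_eq_abs, abs_mul] using
          norm_integral_le_integral_norm (μ := Q') fun ω => (h ω - 1) * g ω
    _ ≤ ∫ ω, c * (|h ω - 1| * S ω) + d * |h ω - 1| ∂Q' := by
        refine integral_mono hintg hintcomb fun ω => ?_
        have := mul_le_mul_of_nonneg_left (hbound ω) (abs_nonneg (h ω - 1))
        calc |h ω - 1| * |g ω| ≤ |h ω - 1| * (c * S ω + d) := this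
          _ = c * (|h ω - 1| * S ω) + d * |h ω - 1| := by ring
    _ = c * ∫ ω, |h ω - 1| * S ω ∂Q' + d * ∫ ω, |h ω - 1| ∂Q' := by
        rw [integral_add (hintS.const_mul c) (hint1.const_mul d),
          integral_const_mul, integral_const_mul]
    _ ≤ c * tv (Q.withDensity fun ω => ENNReal.ofReal (S ω))
          (Q'.withDensity fun ω => ENNReal.ofReal (S ω)) + d * tv Q Q' := by
        refine add_le_add (mul_le_mul_of_nonneg_left
          (tv_bound Q Q' h1 S hSmeas hSnn hSint hSint') hc)
          (mul_le_mul_of_nonneg_left ?_ hd)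
        have := tv_bound Q Q' h1 (fun _ => 1) measurable_const (fun _ => zero_le_one)
          (integrable_const 1) (integrable_const 1)
        simpa [ENNReal.ofReal_one, withDensity_one] using this
end

section
/- Let Q and Q̃ be probability measures on (Ω, F), S ≥ 0 measurable with ∫S dQ = ∫S dQ̃ = 1, and define Q', Q̃' by densities S w.r.t. Q, Q̃ respectively. If Q̃ ≪ Q with density D = dQ̃/dQ, then Q̃' ≪ Q' on {S > 0} with dQ̃'/dQ' = D on {S > 0}, and ‖Q' − Q̃'‖ = ∫ S·|1 − D| dQ. -/
set_option maxHeartbeats 1000000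


open MeasureTheory

theorem stmt_17 {Ω : Type*} [MeasurableSpace Ω] (Q Qt : Measure Ω)
    [IsProbabilityMeasure Q] [IsProbabilityMeasure Qt]
    (S : Ω → ℝ) (hSmeas : Measurable S) (hSnn : ∀ ω, 0 ≤ S ω)
    (hS1 : ∫ ω, S ω ∂Q = 1) (hS1' : ∫ ω, S ω ∂Qt = 1)
    (hQtQ : Qt ≪ Q) :
    ((Qt.withDensity fun ω => ENNReal.ofReal (S ω)).restrict {ω | 0 < S ω}
        ≪ (Q.withDensity fun ω => ENNReal.ofReal (S ω)).restrict {ω | 0 < S ω})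
    ∧ (((Qt.withDensity fun ω => ENNReal.ofReal (S ω)).restrict {ω | 0 < S ω}).rnDeriv
          ((Q.withDensity fun ω => ENNReal.ofReal (S ω)).restrict {ω | 0 < S ω})
        =ᵐ[Q.restrict {ω | 0 < S ω}] Qt.rnDeriv Q)
    ∧ tv (Q.withDensity fun ω => ENNReal.ofReal (S ω))
          (Qt.withDensity fun ω => ENNReal.ofReal (S ω))
        = ∫ ω, S ω * |1 - (Qt.rnDeriv Q ω).toReal| ∂Q := by
  have hsE : Measurable (fun ω => ENNReal.ofReal (S ω)) := hSmeas.ennreal_ofReal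
  set sE : Ω → ENNReal := fun ω => ENNReal.ofReal (S ω) with hsE_def
  set s : Set Ω := {ω | 0 < S ω} with hs_def
  have hs : MeasurableSet s := measurableSet_lt measurable_const hSmeas
  have hD : Measurable (Qt.rnDeriv Q) := Measure.measurable_rnDeriv Qt Q
  -- Qt.withDensity sE = (Q.withDensity sE).withDensity (rnDeriv Qt Q)
  have hQtS : Qt.withDensity sE = (Q.withDensity sE).withDensity (Qt.rnDeriv Q) := by
    conv_lhs => rw [← Measure.withDensity_rnDeriv_eq Qt Q hQtQ]
    rw [← withDensity_mul _ hD hsE, mul_comm, withDensity_mul _ hsE hD]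
  -- integrability facts
  have hSint : Integrable S Q := by
    by_contra hc; rw [integral_undef hc] at hS1; norm_num at hS1
  have hSint' : Integrable S Qt := by
    by_contra hc; rw [integral_undef hc] at hS1'; norm_num at hS1'
  -- finiteness of Q.withDensity sE
  have hQ'fin : IsFiniteMeasure (Q.withDensity sE) := by
    constructor
    rw [withDensity_apply _ MeasurableSet.univ, Measure.restrict_univ,
      ← ofReal_integral_eq_lintegral_ofReal hSint (Filter.Eventually.of_forall hSnn), hS1]
    simp
  haveI := hQ'fin
  -- Part 1
  have hac : (Qt.withDensity sE).restrict s ≪ (Q.withDensity sE).restrict s := by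
    rw [hQtS]
    exact (withDensity_absolutelyContinuous _ _).restrict s
  refine ⟨hac, ?_, ?_⟩
  · -- Part 2
    have h2 : ((Qt.withDensity sE).restrict s).rnDeriv ((Q.withDensity sE).restrict s)
        =ᵐ[(Q.withDensity sE).restrict s] Qt.rnDeriv Q := by
      rw [hQtS, restrict_withDensity hs (Qt.rnDeriv Q)]
      exact Measure.rnDeriv_withDensity _ hD
    have hacQ : Q.restrict s ≪ (Q.withDensity sE).restrict s := by
      refine Measure.AbsolutelyContinuous.mk fun A hA hA0 => ?_
      rw [Measure.restrict_apply hA] at hA0 ⊢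
      rw [withDensity_apply _ (hA.inter hs)] at hA0
      have h1 := (lintegral_eq_zero_iff hsE).mp hA0
      have h2' := ae_restrict_mem (μ := Q) (hA.inter hs)
      have hfalse : ∀ᵐ x ∂(Q.restrict (A ∩ s)), False := by
        filter_upwards [h1, h2'] with x hx1 hx2
        have : S x ≤ 0 := ENNReal.ofReal_eq_zero.mp hx1
        exact absurd hx2.2 (not_lt.mpr this)
      rw [ae_iff] at hfalse
      simpa [Measure.restrict_apply_univ] using hfalse
    exact hacQ.ae_le h2
  · -- Part 3
    set D : Ω → ℝ := fun ω => (Qt.rnDeriv Q ω).toReal with hD_def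
    set h : Ω → ℝ := fun ω => S ω * (1 - D ω) with hh_def
    have hhalt : h = fun ω => S ω - D ω • S ω := by
      funext ω; simp [hh_def, smul_eq_mul]; ring
    have hg : Integrable (fun ω => D ω • S ω) Q :=
      (integrable_rnDeriv_smul_iff hQtQ).mpr hSint'
    have hhint : Integrable h Q := by rw [hhalt]; exact hSint.sub hg
    have hgint : ∫ ω, D ω • S ω ∂Q = 1 := by
      rw [hD_def]; rw [integral_rnDeriv_smul hQtQ]; exact hS1'
    have hh0 : ∫ ω, h ω ∂Q = 0 := by
      rw [hhalt, integral_sub hSint hg, hS1, hgint]; ring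
    set c : ℝ := ∫ ω, |h ω| ∂Q with hc_def
    have hmax : ∀ a : ℝ, max a 0 = (|a| + a) / 2 := fun a => by
      rcases le_total a 0 with ha | ha
      · rw [max_eq_right ha, abs_of_nonpos ha]; ring
      · rw [max_eq_left ha, abs_of_nonneg ha]; ring
    have hmaxneg : ∀ a : ℝ, max (-a) 0 = (|a| - a) / 2 := fun a => by
      rcases le_total a 0 with ha | ha
      · rw [max_eq_left (by linarith), abs_of_nonpos ha]; ring
      · rw [max_eq_right (by linarith), abs_of_nonneg ha]; ring
    have hplusint : Integrable (fun ω => max (h ω) 0) Q := by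
      have : (fun ω => max (h ω) 0) = fun ω => (|h ω| + h ω) / 2 := by
        funext ω; exact hmax _
      rw [this]; exact (hhint.abs.add hhint).div_const 2
    have hnegint : Integrable (fun ω => max (-h ω) 0) Q := by
      have : (fun ω => max (-h ω) 0) = fun ω => (|h ω| - h ω) / 2 := by
        funext ω; exact hmaxneg _
      rw [this]; exact (hhint.abs.sub hhint).div_const 2
    have hplus : ∫ ω, max (h ω) 0 ∂Q = c / 2 := by
      have : (fun ω => max (h ω) 0) = fun ω => (|h ω| + h ω) / 2 := by
        funext ω; exact hmax _
      rw [this, integral_div, integral_add hhint.abs hhint, hh0, ← hc_def, add_zero]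
    have hneg : ∫ ω, max (-h ω) 0 ∂Q = c / 2 := by
      have : (fun ω => max (-h ω) 0) = fun ω => (|h ω| - h ω) / 2 := by
        funext ω; exact hmaxneg _
      rw [this, integral_div, integral_sub hhint.abs hhint, hh0, ← hc_def, sub_zero]
    -- the pointwise identity between detected set-differences and ∫_A h
    have hdiff : ∀ A : Set Ω, MeasurableSet A →
        ((Q.withDensity sE) A).toReal - ((Qt.withDensity sE) A).toReal
          = ∫ ω in A, h ω ∂Q := by
      intro A hA
      have e1 : ((Q.withDensity sE) A).toReal = ∫ ω in A, S ω ∂Q := by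
        rw [withDensity_apply _ hA,
          integral_eq_lintegral_of_nonneg_ae (Filter.Eventually.of_forall fun ω => hSnn ω)
            hSmeas.aestronglyMeasurable.restrict]
      have e2 : ((Qt.withDensity sE) A).toReal = ∫ ω in A, D ω • S ω ∂Q := by
        have e2' : ∫ ω in A, D ω • S ω ∂Q = ∫ ω in A, S ω ∂Qt := by
          simp only [hD_def]
          exact setIntegral_rnDeriv_smul hQtQ hA
        rw [e2', withDensity_apply _ hA,
          integral_eq_lintegral_of_nonneg_ae (Filter.Eventually.of_forall fun ω => hSnn ω)
            hSmeas.aestronglyMeasurable.restrict]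
      rw [e1, e2, ← integral_sub hSint.integrableOn hg.integrableOn]
      apply setIntegral_congr_fun hA
      intro ω _
      simp [hh_def, smul_eq_mul]; ring
    -- bound on every measurable set
    have hbound : ∀ A : Set Ω, MeasurableSet A → |∫ ω in A, h ω ∂Q| ≤ c / 2 := by
      intro A hA
      have hsplit : ∫ ω in A, h ω ∂Q
          = (∫ ω in A, max (h ω) 0 ∂Q) - ∫ ω in A, max (-h ω) 0 ∂Q := by
        rw [← integral_sub hplusint.integrableOn hnegint.integrableOn]
        apply setIntegral_congr_fun hA
        intro ω _
        show h ω = max (h ω) 0 - max (-h ω) 0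
        rcases le_total (h ω) 0 with hω | hω
        · rw [max_eq_right hω, max_eq_left (by linarith)]; ring
        · rw [max_eq_left hω, max_eq_right (by linarith)]; ring
      have h1 : (0:ℝ) ≤ ∫ ω in A, max (h ω) 0 ∂Q :=
        setIntegral_nonneg hA fun ω _ => le_max_right _ _
      have h2 : ∫ ω in A, max (h ω) 0 ∂Q ≤ c / 2 := by
        rw [← hplus]
        exact setIntegral_le_integral hplusint
          (Filter.Eventually.of_forall fun ω => le_max_right _ _)
      have h3 : (0:ℝ) ≤ ∫ ω in A, max (-h ω) 0 ∂Q :=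
        setIntegral_nonneg hA fun ω _ => le_max_right _ _
      have h4 : ∫ ω in A, max (-h ω) 0 ∂Q ≤ c / 2 := by
        rw [← hneg]
        exact setIntegral_le_integral hnegint
          (Filter.Eventually.of_forall fun ω => le_max_right _ _)
      rw [hsplit, abs_sub_le_iff]
      constructor <;> linarith
    -- attainment
    have hs' : MeasurableSet {ω | 0 < h ω} :=
      measurableSet_lt measurable_const
        (hSmeas.mul ((measurable_const.sub (hD.ennreal_toReal))))
    have hattain : ∫ ω in {ω | 0 < h ω}, h ω ∂Q = c / 2 := by
      rw [← integral_indicator hs', ← hplus]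
      apply integral_congr_ae
      filter_upwards with ω
      show Set.indicator {ω | 0 < h ω} h ω = max (h ω) 0
      rcases lt_or_ge 0 (h ω) with hω | hω
      · rw [Set.indicator_of_mem (show ω ∈ {ω | 0 < h ω} from hω) h, max_eq_left hω.le]
      · rw [Set.indicator_of_notMem (show ω ∉ {ω | 0 < h ω} by simpa using hω) h, max_eq_right hω]
    have hcnn : 0 ≤ c := integral_nonneg fun ω => abs_nonneg _
    -- compute the supremum
    have hkey : (⨆ A : {A : Set Ω // MeasurableSet A},
        |((Q.withDensity sE) A.1).toReal - ((Qt.withDensity sE) A.1).toReal|) = c / 2 := by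
      have heq : ∀ A : {A : Set Ω // MeasurableSet A},
          |((Q.withDensity sE) A.1).toReal - ((Qt.withDensity sE) A.1).toReal|
            = |∫ ω in A.1, h ω ∂Q| := fun A => by rw [hdiff A.1 A.2]
      apply le_antisymm
      · exact ciSup_le fun A => (heq A).trans_le (hbound A.1 A.2)
      · have hbdd : BddAbove (Set.range fun A : {A : Set Ω // MeasurableSet A} =>
            |((Q.withDensity sE) A.1).toReal - ((Qt.withDensity sE) A.1).toReal|) := by
          refine ⟨c / 2, ?_⟩
          rintro x ⟨A, rfl⟩
          exact (heq A).trans_le (hbound A.1 A.2)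
        refine le_ciSup_of_le hbdd ⟨{ω | 0 < h ω}, hs'⟩ ?_
        show c / 2 ≤ |((Q.withDensity sE) {ω | 0 < h ω}).toReal
            - ((Qt.withDensity sE) {ω | 0 < h ω}).toReal|
        rw [heq ⟨{ω | 0 < h ω}, hs'⟩, hattain, abs_of_nonneg (by linarith)]
      -- done
    simp only [tv, ← hsE_def]
    rw [hkey]
    have : 2 * (c / 2) = c := by ring
    rw [this, hc_def]
    apply integral_congr_ae
    filter_upwards with ω
    rw [hh_def]
    simp only
    rw [abs_mul, abs_of_nonneg (hSnn ω)]
end
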